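/- If an operator D on a Hilbert space satisfies the Ginsparg-Wilson relation D γ₅ + γ₅ D = D γ₅ D and the γ₅-hermiticity γ₅ D γ₅ = D†, where γ₅ is a self-adjoint involution, then D + D† = D† D = D D†; in particular D is normal. -/

import Mathlib

/-- If an operator `D` on a finite-dimensional complex Hilbert space satisfies the
Ginsparg-Wilson relation `D γ₅ + γ₅ D = D γ₅ D` and γ₅-hermiticity `γ₅ D γ₅ = D†`,
where `γ₅` is a self-adjoint involution, then `D + D† = D† D = D D†`; in particular
`D` is normal. -/
theorem ginsparg_wilson_normal (n : ℕ)
    (γ₅ D : EuclideanSpace ℂ (Fin n) →ₗ[ℂ] EuclideanSpace ℂ (Fin n))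
    (hinv : γ₅ * γ₅ = 1) (hsa : LinearMap.adjoint γ₅ = γ₅)
    (hGW : D * γ₅ + γ₅ * D = D * γ₅ * D)
    (hherm : γ₅ * D * γ₅ = LinearMap.adjoint D) :
    D + LinearMap.adjoint D = LinearMap.adjoint D * D ∧
      LinearMap.adjoint D * D = D * LinearMap.adjoint D := by
  constructor
  · have h := congrArg (fun X => γ₅ * X) hGW
    simp only [mul_add] at h
    calc D + LinearMap.adjoint D = γ₅ * (γ₅ * D) + γ₅ * (D * γ₅) := by
          rw [← hherm]; rw [← mul_assoc, hinv, one_mul]; noncomm_ring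
      _ = γ₅ * (D * γ₅ * D) := by rw [← h]; abel
      _ = LinearMap.adjoint D * D := by rw [← hherm]; noncomm_ring
  · have h1 := congrArg (fun X => γ₅ * X) hGW
    have h2 := congrArg (fun X => X * γ₅) hGW
    simp only [mul_add, add_mul] at h1 h2
    have e1 : LinearMap.adjoint D * D = γ₅ * (γ₅ * D) + γ₅ * (D * γ₅) := by
      rw [← hherm]
      calc γ₅ * D * γ₅ * D = γ₅ * (D * γ₅ * D) := by noncomm_ring
        _ = _ := by rw [← h1]; abel
    have e2 : D * LinearMap.adjoint D = D * γ₅ * γ₅ + γ₅ * D * γ₅ := by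
      rw [← hherm]
      calc D * (γ₅ * D * γ₅) = D * γ₅ * D * γ₅ := by noncomm_ring
        _ = _ := by rw [← h2]
    rw [e1, e2, ← mul_assoc, hinv, mul_assoc, hinv]
    noncomm_ring
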